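/- Let k be a field, n a positive integer, w = (w₁,…,w_n) ∈ ℤ_{≥0}ⁿ, and f ∈ k[x₁,…,x_n] a nonzero polynomial. Let f̄ ∈ k[x₁,…,x_n] be obtained from f by substituting x_i ↦ 0 for every i with w_i > 0 and leaving x_i unchanged when w_i = 0. Regard f and f̄ as Laurent polynomials via the natural inclusion. Then trop(f)(w) ≥ 0; if trop(f)(w) = 0 then f̄ = init_w f, and if trop(f)(w) > 0 then f̄ = 0. In particular, for any ideal J of k[x₁,…,x_n] and any f ∈ J, the image of f̄ in the Laurent polynomial ring lies in the initial ideal in_w(J·k[x₁^{±1},…,x_n^{±1}]). -/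

import Mathlib

noncomputable section
open scoped Classical

/-- The Laurent polynomial ring `k[x₁^{±1},…,x_n^{±1}]`, realized as the additive monoid
algebra on `ℤⁿ`. -/
abbrev Laur (k : Type*) [CommRing k] (n : ℕ) : Type _ := AddMonoidAlgebra k (Fin n → ℤ)

variable {k : Type*} {n : ℕ}

/-- The standard pairing `⟨u,w⟩ = ∑ i, uᵢ wᵢ`. -/
def pairZ (u w : Fin n → ℤ) : ℤ := ∑ i, u i * w i

/-- `trop(f)(w) = min {⟨u,w⟩ : u ∈ supp f}` (junk value for `f = 0`). -/
def tropZ [CommRing k] (w : Fin n → ℤ) (f : Laur k n) : ℤ :=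
  sInf ((fun u => pairZ u w) '' (f.coeff.support : Set (Fin n → ℤ)))

/-- `init_w f`: the sum of the terms of `f` whose exponent `u` satisfies
`⟨u,w⟩ = trop(f)(w)`; `init_w 0 = 0`. -/
def initZ [CommRing k] (w : Fin n → ℤ) (f : Laur k n) : Laur k n :=
  AddMonoidAlgebra.ofCoeff (Finsupp.filter (fun u => pairZ u w = tropZ w f) f.coeff)

/-- The initial ideal `in_w I`, generated by the initial forms of elements of `I`. -/
def initIdealZ [CommRing k] (w : Fin n → ℤ) (I : Ideal (Laur k n)) : Ideal (Laur k n) :=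
  Ideal.span {g | ∃ f ∈ I, g = initZ w f}

/-- `σ_{ξ,w}`: the `k`-algebra automorphism of the Laurent polynomial ring determined by
`x^u ↦ ξ^{⟨u,w⟩} x^u`. -/
def sigmaTw [Field k] (ξ : kˣ) (w : Fin n → ℤ) (f : Laur k n) : Laur k n :=
  AddMonoidAlgebra.ofCoeff (∑ u ∈ f.coeff.support, Finsupp.single u (((ξ ^ pairZ u w : kˣ) : k) * f.coeff u))

/-- The monomial `x^u` of the Laurent polynomial ring. -/
def xu [CommRing k] (u : Fin n → ℤ) : Laur k n := AddMonoidAlgebra.single u 1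

/-- The natural inclusion of the polynomial ring into the Laurent polynomial ring,
sending `xᵢ` to `x^{eᵢ}`. -/
def toLaurent [Field k] : MvPolynomial (Fin n) k →ₐ[k] Laur k n :=
  MvPolynomial.aeval (fun i => (xu (Pi.single i 1) : Laur k n))

-- auxiliary
def eHom : (Fin n →₀ ℕ) →+ (Fin n → ℤ) where
  toFun d := fun i => (d i : ℤ)
  map_zero' := by ext i; simp
  map_add' d e := by ext i; simp

lemma eHom_injective : Function.Injective (eHom (n := n)) := by
  intro d e h
  ext i
  have := congrFun h i
  simp only [eHom, AddMonoidHom.coe_mk, ZeroHom.coe_mk] at this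
  exact_mod_cast this

lemma toLaurent_eq_mapDomain [Field k] (f : MvPolynomial (Fin n) k) :
    toLaurent f = AddMonoidAlgebra.ofCoeff
      (Finsupp.mapDomain (eHom (n := n)) (AddMonoidAlgebra.coeff f)) := by
  have h : (toLaurent (k := k) (n := n)) =
      AddMonoidAlgebra.mapDomainAlgHom k k (eHom (n := n)) := by
    apply MvPolynomial.algHom_ext
    intro i
    have h1 : toLaurent (k := k) (n := n) (MvPolynomial.X i) = xu (Pi.single i 1) :=
      MvPolynomial.aeval_X _ i
    have h2 : (AddMonoidAlgebra.mapDomainAlgHom k k (eHom (n := n))) (MvPolynomial.X i)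
        = AddMonoidAlgebra.ofCoeff (Finsupp.mapDomain (eHom (n := n))
            (AddMonoidAlgebra.coeff (MvPolynomial.X i : MvPolynomial (Fin n) k))) := rfl
    have h3 : eHom (Finsupp.single i 1) = Pi.single i (1 : ℤ) := by
      ext j
      by_cases hj : j = i
      · subst hj; simp [eHom]
      · simp [eHom, Finsupp.single_apply, Pi.single_apply, hj, Ne.symm hj]
    rw [h1]
    show xu (Pi.single i 1) = AddMonoidAlgebra.ofCoeff (Finsupp.mapDomain (eHom (n := n))
      (AddMonoidAlgebra.coeff (MvPolynomial.X i : MvPolynomial (Fin n) k)))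
    rw [show AddMonoidAlgebra.coeff (MvPolynomial.X i : MvPolynomial (Fin n) k)
        = Finsupp.single (Finsupp.single i 1) 1 from rfl, Finsupp.mapDomain_single, h3]
    rfl
  rw [h]
  rfl

lemma support_toLaurent [Field k] (f : MvPolynomial (Fin n) k) :
    (toLaurent f).coeff.support = (AddMonoidAlgebra.coeff f).support.image (eHom (n := n)) := by
  rw [toLaurent_eq_mapDomain]
  exact Finsupp.mapDomain_support_of_injective eHom_injective _

lemma toLaurent_ne_zero [Field k] {f : MvPolynomial (Fin n) k} (hf : f ≠ 0) :
    toLaurent f ≠ 0 := by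
  rw [toLaurent_eq_mapDomain]
  intro h
  exact hf (AddMonoidAlgebra.coeff_injective
    (Finsupp.mapDomain_injective eHom_injective (by simpa using h)))

lemma pair_eHom (d : Fin n →₀ ℕ) (w : Fin n → ℕ) :
    pairZ (eHom d) (fun i => (w i : ℤ)) = ∑ i, (d i : ℤ) * (w i : ℤ) := rfl

lemma pair_eHom_nonneg (d : Fin n →₀ ℕ) (w : Fin n → ℕ) :
    0 ≤ pairZ (eHom d) (fun i => (w i : ℤ)) := by
  rw [pair_eHom]
  exact Finset.sum_nonneg fun i _ => mul_nonneg (Int.natCast_nonneg _) (Int.natCast_nonneg _)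

lemma pair_eHom_eq_zero_iff (d : Fin n →₀ ℕ) (w : Fin n → ℕ) :
    pairZ (eHom d) (fun i => (w i : ℤ)) = 0 ↔ ∀ i, 0 < w i → d i = 0 := by
  rw [pair_eHom, Finset.sum_eq_zero_iff_of_nonneg
    (fun i _ => mul_nonneg (Int.natCast_nonneg _) (Int.natCast_nonneg _))]
  constructor
  · intro h i hwi
    have := h i (Finset.mem_univ i)
    rcases mul_eq_zero.1 this with h' | h'
    · exact_mod_cast h'
    · exact absurd (by exact_mod_cast h' : w i = 0) (by omega)
  · intro h i _
    by_cases hwi : 0 < w i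
    · rw [h i hwi]; simp
    · have : w i = 0 := by omega
      rw [this]; simp

lemma mapDomain_filter [Field k] (q : (Fin n → ℤ) → Prop) (f : MvPolynomial (Fin n) k) :
    Finsupp.filter q (Finsupp.mapDomain (eHom (n := n)) (AddMonoidAlgebra.coeff f))
      = Finsupp.mapDomain (eHom (n := n))
        (Finsupp.filter (fun d => q (eHom d)) (AddMonoidAlgebra.coeff f)) := by
  ext u
  by_cases hu : u ∈ Set.range (eHom (n := n))
  · obtain ⟨d, rfl⟩ := hu
    rw [Finsupp.filter_apply, Finsupp.mapDomain_apply eHom_injective,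
      Finsupp.mapDomain_apply eHom_injective, Finsupp.filter_apply]
  · rw [Finsupp.filter_apply, Finsupp.mapDomain_notin_range _ _ hu,
      Finsupp.mapDomain_notin_range _ _ hu]
    simp

lemma aeval_subst [Field k] (w : Fin n → ℕ) (f : MvPolynomial (Fin n) k) :
    (MvPolynomial.aeval
        (fun i => if 0 < w i then (0 : MvPolynomial (Fin n) k) else MvPolynomial.X i) f)
      = AddMonoidAlgebra.ofCoeff (Finsupp.filter (fun d : Fin n →₀ ℕ => ∀ i, 0 < w i → d i = 0)
          (AddMonoidAlgebra.coeff f)) := by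
  induction f using MvPolynomial.induction_on' with
  | monomial d c =>
    rw [MvPolynomial.aeval_monomial]
    by_cases hP : ∀ i, 0 < w i → d i = 0
    · have hprod : (d.prod fun i e =>
          (if 0 < w i then (0 : MvPolynomial (Fin n) k) else MvPolynomial.X i) ^ e)
          = d.prod fun i e => (MvPolynomial.X i : MvPolynomial (Fin n) k) ^ e := by
        apply Finsupp.prod_congr
        intro i hi
        have : ¬ 0 < w i := fun hw => (Finsupp.mem_support_iff.1 hi) (hP i hw)
        rw [if_neg this]
      rw [hprod, show (AddMonoidAlgebra.ofCoeff (Finsupp.filter (fun d : Fin n →₀ ℕ => ∀ i, 0 < w i → d i = 0)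
          (AddMonoidAlgebra.coeff (MvPolynomial.monomial d c : MvPolynomial (Fin n) k))) : MvPolynomial (Fin n) k)
          = MvPolynomial.monomial d c from
            congrArg AddMonoidAlgebra.ofCoeff (Finsupp.filter_single_of_pos _ hP)]
      rw [MvPolynomial.monomial_eq]
      rfl
    · push_neg at hP
      obtain ⟨i, hwi, hdi⟩ := hP
      have : (d.prod fun i e =>
          (if 0 < w i then (0 : MvPolynomial (Fin n) k) else MvPolynomial.X i) ^ e) = 0 := by
        apply Finset.prod_eq_zero (Finsupp.mem_support_iff.2 hdi)
        show (if 0 < w i then (0 : MvPolynomial (Fin n) k) else MvPolynomial.X i) ^ d i = 0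
        rw [if_pos hwi, zero_pow hdi]
      rw [this, mul_zero, show (AddMonoidAlgebra.ofCoeff (Finsupp.filter (fun d : Fin n →₀ ℕ => ∀ i, 0 < w i → d i = 0)
          (AddMonoidAlgebra.coeff (MvPolynomial.monomial d c : MvPolynomial (Fin n) k))) : MvPolynomial (Fin n) k) = 0 from
        congrArg AddMonoidAlgebra.ofCoeff
          (Finsupp.filter_single_of_neg _ (by push_neg; exact ⟨i, hwi, hdi⟩))]
  | add p q hp hq =>
    rw [map_add, hp, hq, ← AddMonoidAlgebra.ofCoeff_add, ← Finsupp.filter_add]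
    rfl

lemma filter_congr' {M : Type*} [AddCommMonoid M] {α : Type*} (p q : α → Prop)
    (h : ∀ a, p a ↔ q a) (f : α →₀ M) : Finsupp.filter p f = Finsupp.filter q f := by
  ext a
  rw [Finsupp.filter_apply, Finsupp.filter_apply, if_congr (h a) rfl rfl]


/-- Let `w ∈ ℤ_{≥0}ⁿ` and let `f` be a nonzero polynomial.  Let `f̄` be
obtained from `f` by substituting `xᵢ ↦ 0` whenever `wᵢ > 0`.  Then `trop(f)(w) ≥ 0`; if
`trop(f)(w) = 0` then `f̄ = init_w f`, and if `trop(f)(w) > 0` then `f̄ = 0`.  In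
particular, for any ideal `J` of `k[x₁,…,x_n]` and `f ∈ J`, the image of `f̄` lies in the
initial ideal `in_w (J·k[x₁^{±1},…,x_n^{±1}])`. -/
theorem substitution_zero_initial_form [Field k] (hn : 0 < n) (w : Fin n → ℕ)
    (f : MvPolynomial (Fin n) k) (hf : f ≠ 0) :
    0 ≤ tropZ (fun i => (w i : ℤ)) (toLaurent f) ∧
    (tropZ (fun i => (w i : ℤ)) (toLaurent f) = 0 →
      toLaurent (MvPolynomial.aeval
          (fun i => if 0 < w i then (0 : MvPolynomial (Fin n) k) else MvPolynomial.X i) f) =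
        initZ (fun i => (w i : ℤ)) (toLaurent f)) ∧
    (0 < tropZ (fun i => (w i : ℤ)) (toLaurent f) →
      MvPolynomial.aeval (fun i => if 0 < w i then (0 : MvPolynomial (Fin n) k) else MvPolynomial.X i) f = 0) ∧
    ∀ J : Ideal (MvPolynomial (Fin n) k), f ∈ J →
      toLaurent (MvPolynomial.aeval
          (fun i => if 0 < w i then (0 : MvPolynomial (Fin n) k) else MvPolynomial.X i) f) ∈
        initIdealZ (fun i => (w i : ℤ)) (Ideal.map (toLaurent (k := k) (n := n)) J) := by
  set wZ : Fin n → ℤ := fun i => (w i : ℤ) with hwZ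
  set S : Set ℤ := (fun u => pairZ u wZ) '' ((toLaurent f).coeff.support : Set (Fin n → ℤ)) with hS
  have hsupp := support_toLaurent (k := k) f
  have hne : S.Nonempty := by
    obtain ⟨u, hu⟩ := Finsupp.support_nonempty_iff.2
      (fun h => toLaurent_ne_zero hf (AddMonoidAlgebra.coeff_injective (h.trans rfl)))
    exact ⟨pairZ u wZ, u, hu, rfl⟩
  have hlb : ∀ x ∈ S, (0 : ℤ) ≤ x := by
    rintro x ⟨u, hu, rfl⟩
    rw [Finset.mem_coe, hsupp] at hu
    obtain ⟨d, _, rfl⟩ := Finset.mem_image.1 hu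
    exact pair_eHom_nonneg d w
  have h0 : 0 ≤ tropZ wZ (toLaurent f) := le_csInf hne hlb
  have hbdd : BddBelow S := ⟨0, hlb⟩
  have key2 : tropZ wZ (toLaurent f) = 0 →
      toLaurent (MvPolynomial.aeval
        (fun i => if 0 < w i then (0 : MvPolynomial (Fin n) k) else MvPolynomial.X i) f)
      = initZ wZ (toLaurent f) := by
    intro ht
    rw [aeval_subst, toLaurent_eq_mapDomain, initZ, ht, toLaurent_eq_mapDomain]
    ext u
    simp only [AddMonoidAlgebra.coeff_ofCoeff]
    by_cases hu : u ∈ Set.range (eHom (n := n))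
    · obtain ⟨d, rfl⟩ := hu
      rw [Finsupp.mapDomain_apply eHom_injective, Finsupp.filter_apply, Finsupp.filter_apply,
        Finsupp.mapDomain_apply eHom_injective]
      simp only [hwZ, pair_eHom_eq_zero_iff]
    · rw [Finsupp.filter_apply, Finsupp.mapDomain_notin_range _ _ hu,
        Finsupp.mapDomain_notin_range _ _ hu]
      simp
  have key3 : 0 < tropZ wZ (toLaurent f) →
      MvPolynomial.aeval
        (fun i => if 0 < w i then (0 : MvPolynomial (Fin n) k) else MvPolynomial.X i) f = 0 := by
    intro ht
    rw [aeval_subst, AddMonoidAlgebra.ofCoeff_eq_zero]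
    rw [show (Finsupp.filter (fun d : Fin n →₀ ℕ => ∀ i, 0 < w i → d i = 0) (AddMonoidAlgebra.coeff f) : (Fin n →₀ ℕ) →₀ k) = 0
      ↔ _ from Finsupp.filter_eq_zero_iff _ _]
    intro d hd
    by_contra hfd
    have hmem : eHom d ∈ (toLaurent f).coeff.support := by
      rw [hsupp]
      exact Finset.mem_image_of_mem _ (Finsupp.mem_support_iff.2 hfd)
    have : pairZ (eHom d) wZ ∈ S := ⟨eHom d, hmem, rfl⟩
    have hle : tropZ wZ (toLaurent f) ≤ pairZ (eHom d) wZ := csInf_le hbdd this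
    rw [(pair_eHom_eq_zero_iff d w).2 hd] at hle
    omega
  refine ⟨h0, key2, key3, ?_⟩
  intro J hfJ
  rcases h0.lt_or_eq with ht | ht
  · rw [key3 ht, map_zero]
    exact Ideal.zero_mem _
  · rw [key2 ht.symm]
    exact Ideal.subset_span ⟨toLaurent f, Ideal.mem_map_of_mem _ hfJ, rfl⟩

end
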